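/- Let S(n,k) be the Stirling number of the second kind, realized as the number of equivalence relations on Fin n with exactly k equivalence classes, i.e. S(n,k) = Fintype.card {s : Setoid (Fin n) // Fintype.card (Quotient s) = k}. Then for all n ≥ 1 and all k, \sum_{l=k}^{n-1} \binom{n-1}{l} S(l,k) = S(n, k+1). -/

import Mathlib

instance instFiniteSetoidFin (n : ℕ) : Finite (Setoid (Fin n)) :=
  Finite.of_injective (fun s => s.r) fun a b h => by cases a; cases b; congr

noncomputable instance instFintypeQuotSetoidFin (n : ℕ) (s : Setoid (Fin n)) :
    Fintype (Quotient s) :=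
  Fintype.ofFinite _

noncomputable instance instFintypeSetoidFinCard (n k : ℕ) :
    Fintype {s : Setoid (Fin n) // Fintype.card (Quotient s) = k} :=
  Fintype.ofFinite _

/-- The Stirling number of the second kind `S n k`, the number of partitions of an
`n`-element set into exactly `k` nonempty blocks, realized as the number of setoids on
`Fin n` whose quotient has exactly `k` elements. -/
noncomputable def S (n k : ℕ) : ℕ :=
  Fintype.card {s : Setoid (Fin n) // Fintype.card (Quotient s) = k}

open Finset Function

instance setoidFinite {β : Type*} [Finite β] : Finite (Setoid β) :=
  Finite.of_injective (fun s => s.r) fun a b h => by cases a; cases b; congr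

open scoped Classical

section Aux

variable {α β : Type*}

/-- Count of setoids with `k` classes, `Nat.card` version. -/
noncomputable def NS (α : Type*) (k : ℕ) : ℕ :=
  Nat.card {s : Setoid α // Nat.card (Quotient s) = k}

lemma S_eq_NS (n k : ℕ) : S n k = NS (Fin n) k := by
  rw [NS, Nat.card_congr (Equiv.subtypeEquivRight
    (q := fun s : Setoid (Fin n) => Fintype.card (Quotient s) = k)
    (fun s => by rw [Nat.card_eq_fintype_card]))]
  rw [Nat.card_eq_fintype_card, S]

lemma NS_congr (e : α ≃ β) (k : ℕ) : NS α k = NS β k := by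
  refine Nat.card_congr (Equiv.subtypeEquiv
    (⟨fun s => s.comap e.symm, fun s => s.comap e,
      fun s => Setoid.ext fun a b => by
        show s (e.symm (e a)) (e.symm (e b)) ↔ s a b
        simp,
      fun s => Setoid.ext fun a b => by
        show s (e (e.symm a)) (e (e.symm b)) ↔ s a b
        simp⟩ :
        Setoid α ≃ Setoid β) (fun s => ?_))
  have : Quotient s ≃ Quotient (s.comap e.symm) :=
    Quotient.congr e (fun a b => by simp [Setoid.comap_rel])
  rw [Nat.card_congr this]; rfl

lemma S_eq_zero {l k : ℕ} (h : l < k) : S l k = 0 := by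
  rw [S, Fintype.card_eq_zero_iff]
  refine ⟨fun ⟨s, hs⟩ => ?_⟩
  have hle : Fintype.card (Quotient s) ≤ Fintype.card (Fin l) :=
    Fintype.card_le_of_surjective (Quotient.mk s) (fun q => q.exists_rep)
  rw [Fintype.card_fin, hs] at hle
  omega

variable [Fintype α]

noncomputable def forwardA (s : Setoid (Option α)) : Finset α :=
  univ.filter fun a => ¬ s (some a) none

lemma mem_forwardA {s : Setoid (Option α)} {a : α} :
    a ∈ forwardA s ↔ ¬ s (some a) none := by simp [forwardA]

noncomputable def forwardT (s : Setoid (Option α)) : Setoid {x // x ∈ forwardA s} :=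
  s.comap fun x => some x.1

noncomputable def backG (A : Finset α) (t : Setoid {x // x ∈ A}) :
    Option α → Option (Quotient t) :=
  fun x => x.bind fun a => if h : a ∈ A then some (Quotient.mk t ⟨a, h⟩) else none

noncomputable def backS (A : Finset α) (t : Setoid {x // x ∈ A}) : Setoid (Option α) :=
  Setoid.ker (backG A t)

lemma backG_none (A : Finset α) (t : Setoid {x // x ∈ A}) : backG A t none = none := rfl

lemma backG_some_mem (A : Finset α) (t : Setoid {x // x ∈ A}) {a : α} (h : a ∈ A) :
    backG A t (some a) = some (Quotient.mk t ⟨a, h⟩) := by simp [backG, h]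

lemma backG_some_not_mem (A : Finset α) (t : Setoid {x // x ∈ A}) {a : α} (h : a ∉ A) :
    backG A t (some a) = none := by simp [backG, h]

lemma backG_surjective (A : Finset α) (t : Setoid {x // x ∈ A}) :
    Surjective (backG A t) := by
  rintro (_ | q)
  · exact ⟨none, rfl⟩
  · induction q using Quotient.ind with
    | _ x => exact ⟨some x.1, by rw [backG_some_mem A t x.2]⟩

noncomputable def quotBackEquiv (A : Finset α) (t : Setoid {x // x ∈ A}) :
    Quotient (backS A t) ≃ Option (Quotient t) :=
  Setoid.quotientKerEquivOfSurjective _ (backG_surjective A t)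

lemma natCard_quot_backS (A : Finset α) (t : Setoid {x // x ∈ A}) :
    Nat.card (Quotient (backS A t)) = Nat.card (Quotient t) + 1 := by
  rw [Nat.card_congr (quotBackEquiv A t)]
  letI : Fintype (Quotient t) := Fintype.ofFinite _
  simp [Nat.card_eq_fintype_card]

noncomputable def Eall : Setoid (Option α) ≃ Σ A : Finset α, Setoid {x // x ∈ A} where
  toFun s := ⟨forwardA s, forwardT s⟩
  invFun p := backS p.1 p.2
  left_inv s := by
    refine Setoid.ext fun x y => ?_
    show backG _ _ x = backG _ _ y ↔ s x y
    match x, y with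
    | none, none => simpa using s.refl none
    | some a, none =>
      rw [backG_none]
      by_cases h : s (some a) none
      · rw [backG_some_not_mem _ _ (by simp [mem_forwardA, h])]; simpa using h
      · rw [backG_some_mem _ _ (mem_forwardA.2 h)]; simpa using h
    | none, some b =>
      rw [backG_none]
      by_cases h : s (some b) none
      · rw [backG_some_not_mem _ _ (by simp [mem_forwardA, h])]
        simpa using s.symm h
      · rw [backG_some_mem _ _ (mem_forwardA.2 h)]
        exact iff_of_false (by simp) (fun hc => h (s.symm hc))
    | some a, some b =>
      by_cases ha : s (some a) none <;> by_cases hb : s (some b) none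
      · rw [backG_some_not_mem _ _ (by simp [mem_forwardA, ha]),
          backG_some_not_mem _ _ (by simp [mem_forwardA, hb])]
        simpa using s.trans ha (s.symm hb)
      · rw [backG_some_not_mem _ _ (by simp [mem_forwardA, ha]),
          backG_some_mem _ _ (mem_forwardA.2 hb)]
        exact iff_of_false (by simp) (fun hc => hb (s.trans (s.symm hc) ha))
      · rw [backG_some_mem _ _ (mem_forwardA.2 ha),
          backG_some_not_mem _ _ (by simp [mem_forwardA, hb])]
        exact iff_of_false (by simp) (fun hc => ha (s.trans hc hb))
      · rw [backG_some_mem _ _ (mem_forwardA.2 ha),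
          backG_some_mem _ _ (mem_forwardA.2 hb)]
        rw [Option.some_inj, Quotient.eq]
        exact Iff.rfl
  right_inv p := by
    obtain ⟨A, t⟩ := p
    have hA : forwardA (backS A t) = A := by
      ext a
      rw [mem_forwardA]
      show ¬ (backG A t (some a) = backG A t none) ↔ a ∈ A
      rw [backG_none]
      by_cases h : a ∈ A
      · rw [backG_some_mem _ _ h]; simp [h]
      · rw [backG_some_not_mem _ _ h]; simp [h]
    have key : ∀ (B : Finset α) (hB : forwardA (backS A t) = B)
        (t' : Setoid {x // x ∈ B}),
        (∀ (x y : {x // x ∈ B}), forwardT (backS A t)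
          ⟨x.1, hB ▸ x.2⟩ ⟨y.1, hB ▸ y.2⟩ ↔ t' x y) →
        (⟨forwardA (backS A t), forwardT (backS A t)⟩ :
          Σ B : Finset α, Setoid {x // x ∈ B}) = ⟨B, t'⟩ := by
      intro B hB
      subst hB
      intro t' h
      simp only [Sigma.mk.inj_iff, heq_eq_eq, true_and]
      exact Setoid.ext fun x y => h x y
    refine key A hA t (fun x y => ?_)
    show backG A t (some x.1) = backG A t (some y.1) ↔ t x y
    rw [backG_some_mem _ _ x.2, backG_some_mem _ _ y.2, Option.some_inj, Quotient.eq]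

lemma natCard_quot_eq_succ (s : Setoid (Option α)) (k : ℕ) :
    Nat.card (Quotient s) = k + 1 ↔ Nat.card (Quotient (forwardT s)) = k := by
  conv_lhs => rw [show s = backS (forwardA s) (forwardT s) from (Eall.left_inv s).symm]
  rw [natCard_quot_backS]
  omega

noncomputable def mySigmaSubtype {ι : Type*} {β : ι → Type*} (P : ∀ i, β i → Prop) :
    {p : Σ i, β i // P p.1 p.2} ≃ Σ i, {b : β i // P i b} where
  toFun x := ⟨x.1.1, x.1.2, x.2⟩
  invFun x := ⟨⟨x.1, x.2.1⟩, x.2.2⟩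
  left_inv x := rfl
  right_inv x := rfl

lemma NS_option (k : ℕ) :
    NS (Option α) (k + 1) = ∑ A : Finset α, NS {x // x ∈ A} k := by
  have e1 : {s : Setoid (Option α) // Nat.card (Quotient s) = k + 1} ≃
      {p : Σ A : Finset α, Setoid {x // x ∈ A} // Nat.card (Quotient p.2) = k} :=
    Equiv.subtypeEquiv Eall (fun s => natCard_quot_eq_succ s k)
  have e2 := e1.trans (mySigmaSubtype
    (fun (A : Finset α) (t : Setoid {x // x ∈ A}) => Nat.card (Quotient t) = k))
  rw [NS, Nat.card_congr e2]
  letI : ∀ A : Finset α,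
      Fintype {t : Setoid {x // x ∈ A} // Nat.card (Quotient t) = k} :=
    fun A => Fintype.ofFinite _
  rw [Nat.card_eq_fintype_card, Fintype.card_sigma]
  exact Finset.sum_congr rfl fun A _ => (Nat.card_eq_fintype_card).symm

lemma NS_coe_eq_S (A : Finset α) (k : ℕ) : NS {x // x ∈ A} k = S A.card k := by
  rw [S_eq_NS]
  exact NS_congr ((Fintype.equivFin {x // x ∈ A}).trans
    (finCongr (Fintype.card_coe A))) k

end Aux

/-- For all `n ≥ 1` and all `k`, `∑_{l=k}^{n-1} (n-1 choose l) * S l k = S n (k+1)`. -/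
theorem stirling_binomial_identity (n k : ℕ) (hn : 1 ≤ n) :
    ∑ l ∈ Finset.Icc k (n - 1), (n - 1).choose l * S l k = S n (k + 1) := by
  obtain ⟨m, rfl⟩ : ∃ m, n = m + 1 := ⟨n - 1, (Nat.succ_pred_eq_of_pos hn).symm⟩
  simp only [Nat.add_sub_cancel]
  have h1 : S (m + 1) (k + 1) = NS (Option (Fin m)) (k + 1) := by
    rw [S_eq_NS]
    exact NS_congr (finSuccEquiv m) (k + 1)
  rw [h1, NS_option]
  have h2 : ∀ A : Finset (Fin m), NS {x // x ∈ A} k = S A.card k :=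
    fun A => NS_coe_eq_S A k
  simp only [h2]
  rw [show (Finset.univ : Finset (Finset (Fin m))) = Finset.univ.powerset from
    (Finset.powerset_univ).symm]
  rw [Finset.sum_powerset_apply_card (fun j => S j k)]
  simp only [Finset.card_univ, Fintype.card_fin, smul_eq_mul]
  refine Finset.sum_subset ?_ ?_
  · intro j hj
    rw [Finset.mem_Icc] at hj
    rw [Finset.mem_range]
    omega
  · intro j hj hj'
    rw [Finset.mem_range] at hj
    rw [Finset.mem_Icc] at hj'
    have : j < k := by omega
    rw [S_eq_zero this, mul_zero]
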